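/- Let A be a Codazzi tensor on (M,g) with distinct eigenvalue functions λ and μ. If Y ∈ V_λ (i.e. AY = λY) and X, Z ∈ V_μ (i.e. AX = μX and AZ = μZ), then (D_Y μ)·g(X,Z) = (λ − μ)·g(∇_X Y, Z). -/
import Mathlib


/-- Abstract axiomatization of the space of smooth vector fields `VF` on a
Riemannian manifold with point set `M`: a module over the ring of functions
`M → ℝ`, together with the metric `g`, the Levi-Civita connection `nabla`,
the directional derivative `D`, the gradient `grad` and the Lie bracket,
satisfying the usual laws. -/
structure RiemannianSetup (M : Type*) (VF : Type*) [AddCommGroup VF]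
    [Module (M → ℝ) VF] where
  g : VF → VF → M → ℝ
  nabla : VF → VF → VF
  D : VF → (M → ℝ) → M → ℝ
  grad : (M → ℝ) → VF
  bracket : VF → VF → VF
  g_symm : ∀ X Y, g X Y = g Y X
  g_addLeft : ∀ X Y Z, g (X + Y) Z = g X Z + g Y Z
  g_smulLeft : ∀ (f : M → ℝ) (X Y : VF), g (f • X) Y = f * g X Y
  g_nondeg : ∀ X Y : VF, (∀ Z, g X Z = g Y Z) → X = Y
  nabla_addRight : ∀ X Y Z, nabla X (Y + Z) = nabla X Y + nabla X Z
  nabla_addLeft : ∀ X Y Z, nabla (X + Y) Z = nabla X Z + nabla Y Z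
  nabla_smulLeft : ∀ (f : M → ℝ) (X Y : VF), nabla (f • X) Y = f • nabla X Y
  nabla_leibniz : ∀ (X : VF) (f : M → ℝ) (Y : VF),
    nabla X (f • Y) = D X f • Y + f • nabla X Y
  D_add : ∀ X (f₁ f₂ : M → ℝ), D X (f₁ + f₂) = D X f₁ + D X f₂
  D_mul : ∀ X (f₁ f₂ : M → ℝ), D X (f₁ * f₂) = D X f₁ * f₂ + f₁ * D X f₂
  D_const : ∀ X (r : ℝ), D X (fun _ => r) = 0
  D_addLeft : ∀ X Y (f : M → ℝ), D (X + Y) f = D X f + D Y f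
  D_smulLeft : ∀ (h : M → ℝ) X (f : M → ℝ), D (h • X) f = h * D X f
  compat : ∀ X Y Z, D X (g Y Z) = g (nabla X Y) Z + g Y (nabla X Z)
  torsion_free : ∀ X Y, bracket X Y = nabla X Y - nabla Y X
  grad_spec : ∀ (f : M → ℝ) (Z : VF), g (grad f) Z = D Z f

namespace RiemannianSetup

variable {M VF : Type*} [AddCommGroup VF] [Module (M → ℝ) VF]

/-- Covariant derivative `(∇_X A) Y` of a `(1,1)`-tensor `A`. -/
def covDeriv (S : RiemannianSetup M VF) (A : VF → VF) (X Y : VF) : VF :=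
  S.nabla X (A Y) - A (S.nabla X Y)

/-- A Codazzi tensor: a self-adjoint `(1,1)`-tensor with
`(∇_X A) Y = (∇_Y A) X` for all vector fields `X`, `Y`. -/
def IsCodazzi (S : RiemannianSetup M VF) (A : VF → VF) : Prop :=
  (∀ X Y, S.g (A X) Y = S.g X (A Y)) ∧
  (∀ X Y, S.covDeriv A X Y = S.covDeriv A Y X)

end RiemannianSetup

/-- If `A` is a Codazzi tensor with distinct eigenvalue functions `λ` and
`μ`, `Y ∈ V_λ` and `X, Z ∈ V_μ`, then
`(D_Y μ)·g(X,Z) = (λ − μ)·g(∇_X Y, Z)`. -/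
theorem codazzi_eigenvalue_derivative
    {M VF : Type*} [AddCommGroup VF] [Module (M → ℝ) VF]
    (S : RiemannianSetup M VF) (A : VF → VF) (hA : S.IsCodazzi A)
    (lam mu : M → ℝ) (hdist : ∀ p, lam p ≠ mu p)
    (X Y Z : VF)
    (hY : A Y = lam • Y) (hX : A X = mu • X) (hZ : A Z = mu • Z) :
    S.D Y mu * S.g X Z = (lam - mu) * S.g (S.nabla X Y) Z := by
  obtain ⟨hsa, hcod⟩ := hA
  have g_subLeft : ∀ a b c : VF, S.g (a - b) c = S.g a c - S.g b c := by
    intro a b c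
    have : a - b = a + ((-1 : M → ℝ) • b) := by
      rw [neg_one_smul]; abel
    rw [this, S.g_addLeft, S.g_smulLeft]; ring
  have g_smulRight : ∀ (f : M → ℝ) (a b : VF), S.g a (f • b) = f * S.g a b := by
    intro f a b
    rw [S.g_symm, S.g_smulLeft, S.g_symm]
  -- orthogonality of eigenspaces
  have gYZ : S.g Y Z = 0 := by
    have h1 : lam * S.g Y Z = mu * S.g Y Z := by
      calc lam * S.g Y Z = S.g (lam • Y) Z := (S.g_smulLeft _ _ _).symm
        _ = S.g (A Y) Z := by rw [hY]
        _ = S.g Y (A Z) := hsa Y Z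
        _ = S.g Y (mu • Z) := by rw [hZ]
        _ = mu * S.g Y Z := g_smulRight _ _ _
    funext p
    have h2 := congrFun h1 p
    have h3 := hdist p
    have : (lam p - mu p) * S.g Y Z p = 0 := by
      simp only [Pi.mul_apply] at h2; ring_nf; linarith
    rcases mul_eq_zero.mp this with h | h
    · exact absurd (sub_eq_zero.mp h) h3
    · exact h
  -- Codazzi equation
  have hc := hcod X Y
  unfold RiemannianSetup.covDeriv at hc
  rw [hY, hX, S.nabla_leibniz, S.nabla_leibniz] at hc
  have hc2 := congrArg (fun W => S.g W Z) hc
  simp only [g_subLeft, S.g_addLeft, S.g_smulLeft] at hc2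
  have e1 : S.g (A (S.nabla X Y)) Z = mu * S.g (S.nabla X Y) Z := by
    rw [hsa, hZ, g_smulRight]
  have e2 : S.g (A (S.nabla Y X)) Z = mu * S.g (S.nabla Y X) Z := by
    rw [hsa, hZ, g_smulRight]
  rw [e1, e2, gYZ] at hc2
  funext p
  have h := congrFun hc2 p
  simp only [Pi.add_apply, Pi.sub_apply, Pi.mul_apply, Pi.zero_apply] at h ⊢
  ring_nf at h ⊢
  linarith
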